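/- Under the CY condition Σ q_k = 1, for a sector element with g ≠ id, integer ages age(g), age(g^{-1}) ≥ 1, N_g = dim Fix(g), and deg p ≤ ĉ(f^g) = Σ_{k ∈ I_g}(1 - 2q_k), the left charge q_l = deg p - Σ_{k ∈ I_g^c} q_k + age(g) satisfies q_l ≤ N - 2 - Σ_{k ∈ I_g} q_k ≤ N - 2. -/

import Mathlib

/-- Under the CY condition `∑ q_k = 1`, for `g ≠ id` with integer ages
`age(g), age(g⁻¹) ≥ 1`, `age(g) + age(g⁻¹) = N - N_g` and
`deg p ≤ ĉ(f^g) = ∑_{k ∈ I_g}(1 - 2 q_k)`, the left charge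
`q_l = deg p - ∑_{k ∈ I_g^c} q_k + age(g)` satisfies
`q_l ≤ N - 2 - ∑_{k ∈ I_g} q_k ≤ N - 2`. -/
theorem left_charge_le (N : ℕ) (q : Fin N → ℚ) (hq : ∀ k, 0 < q k)
    (hCY : ∑ k, q k = 1) (Ig : Finset (Fin N)) (ageg ageginv : ℤ)
    (hag : 1 ≤ ageg) (hag' : 1 ≤ ageginv)
    (hsum : (ageg : ℚ) + (ageginv : ℚ) = (N : ℚ) - Ig.card)
    (degp : ℚ) (hdeg : degp ≤ ∑ k ∈ Ig, (1 - 2 * q k))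
    (ql : ℚ) (hql : ql = degp - (∑ k ∈ Igᶜ, q k) + ageg) :
    ql ≤ (N : ℚ) - 2 - ∑ k ∈ Ig, q k ∧ ql ≤ (N : ℚ) - 2 := by
  have hsplit : (∑ k ∈ Ig, q k) + ∑ k ∈ Igᶜ, q k = 1 := by
    rw [Finset.sum_add_sum_compl]; exact hCY
  have hexp : ∑ k ∈ Ig, (1 - 2 * q k) = (Ig.card : ℚ) - 2 * ∑ k ∈ Ig, q k := by
    rw [Finset.sum_sub_distrib, Finset.sum_const, ← Finset.mul_sum]
    simp
  have hnn : (0 : ℚ) ≤ ∑ k ∈ Ig, q k :=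
    Finset.sum_nonneg fun k _ => (hq k).le
  have h1 : (1 : ℚ) ≤ (ageginv : ℚ) := by exact_mod_cast hag'
  constructor <;> linarith
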